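/- Let I be a finite index set and, for each i ∈ I, let L_i be a nonempty language over Σ and ψ_i a test-free PDL formula such that either (a) every word of L_i is nonempty and $-free, or (b) every word of L_i has the form u ++ [$] with u $-free, and ψ_i = ⊤. Define L_i^♮ := L_i in case (a) and L_i^♮ := {u | u is $-free and u ++ [$] ∈ L_i} in case (b), and R_i := Lang(ψ_i) in case (a) and R_i := {ε} in case (b). Then Lang(⋁_{i∈I} EF^{L_i} ψ_i) = ⋃_{i∈I} L_i^♮ * R_i, where * is the product of languages. -/

import Mathlib

namespace PDL

/-- Test-free PDL formulas (without atomic propositions) over the alphabet `α`: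
`⊥`, `⊤`, disjunction, conjunction, and `EF^L`/`AG^L` for languages `L ⊆ α*`. -/
inductive Formula (α : Type) : Type where
  | bot : Formula α
  | top : Formula α
  | or  : Formula α → Formula α → Formula α
  | and : Formula α → Formula α → Formula α
  | EF  : Set (List α) → Formula α → Formula α
  | AG  : Set (List α) → Formula α → Formula α

/-- `Path tr s w t` : there is a finite path from `s` to `t` along the
transition relation `tr` whose labels read the word `w`. -/
inductive Path {σ α : Type} (tr : σ → α → σ → Prop) : σ → List α → σ → Prop where
  | nil (s : σ) : Path tr s [] s
  | cons {s t u : σ} {a : α} {w : List α} :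
      tr s a t → Path tr t w u → Path tr s (a :: w) u

/-- Satisfaction of a formula at a state of a labeled transition system. -/
def Sat {σ α : Type} (tr : σ → α → σ → Prop) (s : σ) : Formula α → Prop
  | .bot => False
  | .top => True
  | .or φ ψ => Sat tr s φ ∨ Sat tr s ψ
  | .and φ ψ => Sat tr s φ ∧ Sat tr s ψ
  | .EF L φ => ∃ w t, Path tr s w t ∧ w ∈ L ∧ Sat tr t φ
  | .AG L φ => ∀ w t, Path tr s w t → w ∈ L → Sat tr t φ

/-- A structure: a pointed labeled transition system. -/
structure Struct (α : Type) : Type 1 where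
  S : Type
  tr : S → α → S → Prop
  root : S

/-- A structure satisfies a formula iff its root does. -/
def SatS {α : Type} (M : Struct α) (φ : Formula α) : Prop := Sat M.tr M.root φ

/-- Two formulas are equivalent iff exactly the same structures satisfy them. -/
def FEquiv {α : Type} (φ ψ : Formula α) : Prop := ∀ M : Struct α, SatS M φ ↔ SatS M ψ

/-- A formula is a tautology iff every structure satisfies it. -/
def Tautology {α : Type} (φ : Formula α) : Prop := ∀ M : Struct α, SatS M φ

/-- `φ` semantically implies `ψ`. -/
def SemImplies {α : Type} (φ ψ : Formula α) : Prop := ∀ M : Struct α, SatS M φ → SatS M ψ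

/-- A formula is ε-free iff the empty word lies in no language annotating an
`EF`/`AG` operator occurring in it. -/
def EpsFree {α : Type} : Formula α → Prop
  | .bot => True
  | .top => True
  | .or φ ψ => EpsFree φ ∧ EpsFree ψ
  | .and φ ψ => EpsFree φ ∧ EpsFree ψ
  | .EF L φ => [] ∉ L ∧ EpsFree φ
  | .AG L φ => [] ∉ L ∧ EpsFree φ

/-- Finite disjunction of a list of formulas. -/
def bigOr {α : Type} : List (Formula α) → Formula α
  | [] => .bot
  | φ :: l => .or φ (bigOr l)

/-- Finite conjunction of a list of formulas. -/
def bigAnd {α : Type} : List (Formula α) → Formula α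
  | [] => .top
  | φ :: l => .and φ (bigAnd l)

/-- `M'` extends `M`: the states of `M` embed into those of `M'`, preserving
the root and the transitions. -/
def Extends {α : Type} (M M' : Struct α) : Prop :=
  ∃ i : M.S → M'.S, Function.Injective i ∧ i M.root = M'.root ∧
    ∀ s a t, M.tr s a t → M'.tr (i s) a (i t)

/-- The linear structure `π_w` for a word `w`: states `0, …, |w|`, root `0`,
and a transition `i →^c i+1` where `c` is the `(i+1)`-st letter of `w`. -/
def pathStruct {α : Type} (w : List α) : Struct α where
  S := Fin (w.length + 1)
  tr := fun i a j => ∃ h : (i : ℕ) < w.length, w.get ⟨i, h⟩ = a ∧ (j : ℕ) = (i : ℕ) + 1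
  root := ⟨0, Nat.succ_pos _⟩

/-- `Lang φ` (relative to the designated letter `dollar`): the set of
`$`-free words `w` such that `π_{w ++ [$]}` satisfies `φ`. -/
def Lang {α : Type} (dollar : α) (φ : Formula α) : Set (List α) :=
  {w | dollar ∉ w ∧ SatS (pathStruct (w ++ [dollar])) φ}

lemma path_iff {α : Type} (z : List α) (s t : Fin (z.length + 1)) (x : List α) :
    Path (pathStruct z).tr s x t ↔ x <+: z.drop (s : ℕ) ∧ (t : ℕ) = (s : ℕ) + x.length := by
  induction x generalizing s with
  | nil =>
    constructor
    · intro h; cases h; simp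
    · rintro ⟨-, h⟩
      simp only [List.length_nil] at h
      have : s = t := Fin.ext (by omega)
      subst this; exact .nil s
  | cons a x ih =>
    constructor
    · intro h
      cases h with
      | cons h1 h2 =>
        obtain ⟨hlt, heq, hmid⟩ := h1
        replace h2 := (ih _).mp h2
        obtain ⟨hpre, ht⟩ := h2
        rw [hmid] at hpre ht
        refine ⟨?_, by simp; omega⟩
        rw [← List.getElem_cons_drop (as := z) (i := (s:ℕ)) hlt]
        obtain ⟨r, hr⟩ := hpre
        exact ⟨r, by simp only [List.get_eq_getElem] at heq; rw [List.cons_append, hr, heq]⟩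
    · rintro ⟨hpre, ht⟩
      have hlt : (s : ℕ) < z.length := by
        have := hpre.length_le
        simp at this
        omega
      have hdrop : z.drop (s:ℕ) = z[(s:ℕ)] :: z.drop ((s:ℕ)+1) :=
        (List.getElem_cons_drop (as := z) (i := (s:ℕ)) hlt).symm
      rw [hdrop] at hpre
      obtain ⟨r, hr⟩ := hpre
      simp only [List.cons_append, List.cons.injEq] at hr
      refine Path.cons (t := ⟨(s:ℕ)+1, by omega⟩) ⟨hlt, by simp [hr.1], rfl⟩ ?_
      apply (ih _).mpr
      exact ⟨⟨r, hr.2⟩, by simp only [Fin.val_mk, List.length_cons] at ht ⊢; omega⟩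

lemma sat_shift {α : Type} (u z : List α) (φ : Formula α) (k : ℕ) (hk : k ≤ z.length) :
    Sat (pathStruct (u ++ z)).tr ⟨u.length + k, by simp; omega⟩ φ ↔
    Sat (pathStruct z).tr ⟨k, by omega⟩ φ := by
  induction φ generalizing k with
  | bot => simp [Sat]
  | top => simp [Sat]
  | or φ ψ ih1 ih2 => simp only [Sat]; rw [ih1 k hk, ih2 k hk]
  | and φ ψ ih1 ih2 => simp only [Sat]; rw [ih1 k hk, ih2 k hk]
  | EF L φ ih =>
    simp only [Sat]
    constructor
    · rintro ⟨x, t, hp, hx, hs⟩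
      replace hp := (path_iff _ _ _ _).mp hp
      obtain ⟨hpre, ht⟩ := hp
      simp only [List.drop_length_add_append] at hpre
      have hlen : k + x.length ≤ z.length := by
        have := hpre.length_le; simp at this; omega
      refine ⟨x, ⟨k + x.length, by omega⟩, ?_, hx, ?_⟩
      · apply (path_iff _ _ _ _).mpr; exact ⟨hpre, rfl⟩
      · have ht' : t.val = u.length + k + x.length := ht
        have htt : t = (⟨u.length + (k + x.length), by simp; omega⟩ :
            Fin ((u ++ z).length + 1)) := Fin.ext (show t.val = u.length + (k + x.length) by omega)
        rw [htt] at hs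
        exact (ih (k + x.length) hlen).mp hs
    · rintro ⟨x, t, hp, hx, hs⟩
      replace hp := (path_iff _ _ _ _).mp hp
      obtain ⟨hpre, ht⟩ := hp
      have hlen : k + x.length ≤ z.length := by
        have := hpre.length_le; simp at this; omega
      refine ⟨x, ⟨u.length + (k + x.length), by simp; omega⟩, ?_, hx, ?_⟩
      · apply (path_iff _ _ _ _).mpr
        simp only [List.drop_length_add_append]
        exact ⟨hpre, by omega⟩
      · have ht' : t.val = k + x.length := ht
        have htt : t = (⟨k + x.length, by omega⟩ : Fin (z.length + 1)) :=
          Fin.ext (show t.val = k + x.length from ht')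
        rw [htt] at hs
        exact (ih (k + x.length) hlen).mpr hs
  | AG L φ ih =>
    simp only [Sat]
    constructor
    · intro h x t hp hx
      replace hp := (path_iff _ _ _ _).mp hp
      obtain ⟨hpre, ht⟩ := hp
      have hlen : k + x.length ≤ z.length := by
        have := hpre.length_le; simp at this; omega
      have := h x ⟨u.length + (k + x.length), by simp; omega⟩ ?_ hx
      · have ht' : t.val = k + x.length := ht
        have htt : t = (⟨k + x.length, by omega⟩ : Fin (z.length + 1)) :=
          Fin.ext (show t.val = k + x.length from ht')
        rw [htt]
        exact (ih (k + x.length) hlen).mp this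
      · apply (path_iff _ _ _ _).mpr
        simp only [List.drop_length_add_append]
        exact ⟨hpre, by omega⟩
    · intro h x t hp hx
      replace hp := (path_iff _ _ _ _).mp hp
      obtain ⟨hpre, ht⟩ := hp
      simp only [List.drop_length_add_append] at hpre
      have hlen : k + x.length ≤ z.length := by
        have := hpre.length_le; simp at this; omega
      have := h x ⟨k + x.length, by omega⟩ ?_ hx
      · have ht' : t.val = u.length + k + x.length := ht
        have htt : t = (⟨u.length + (k + x.length), by simp; omega⟩ :
            Fin ((u ++ z).length + 1)) := Fin.ext (show t.val = u.length + (k + x.length) by omega)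
        rw [htt]
        exact (ih (k + x.length) hlen).mpr this
      · apply (path_iff _ _ _ _).mpr; exact ⟨hpre, rfl⟩

lemma sat_bigOr {σ α : Type} (tr : σ → α → σ → Prop) (s : σ) (l : List (Formula α)) :
    Sat tr s (bigOr l) ↔ ∃ φ ∈ l, Sat tr s φ := by
  induction l with
  | nil => simp [bigOr, Sat]
  | cons φ l ih => simp [bigOr, Sat, ih]


lemma sat_congr {α : Type} {z z' : List α} (h : z = z') (t : Fin (z.length + 1))
    (φ : Formula α) :
    Sat (pathStruct z).tr t φ ↔
      Sat (pathStruct z').tr ⟨t.val, by subst h; omega⟩ φ := by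
  subst h; exact Iff.rfl

lemma sat_at_join {α : Type} (u z : List α) (ψ : Formula α)
    (t : Fin ((u ++ z).length + 1)) (ht : t.val = u.length) :
    Sat (pathStruct (u ++ z)).tr t ψ ↔ SatS (pathStruct z) ψ := by
  have h := sat_shift u z ψ 0 (Nat.zero_le _)
  have htt : t = (⟨u.length + 0, by simp only [List.length_append]; omega⟩ : Fin ((u ++ z).length + 1)) :=
    Fin.ext (show t.val = u.length + 0 by omega)
  rw [htt]
  exact h
/-- If each `L_i` is a nonempty language such that either (case `c i = true`)
all its words are nonempty and `$`-free, or (case `c i = false`) all its words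
have the form `u ++ [$]` with `u` `$`-free and `ψ_i = ⊤`, then
`Lang (⋁_i EF^{L_i} ψ_i) = ⋃_i L_i^♮ * R_i` where `L_i^♮ := L_i` resp.
`L_i / $`, and `R_i := Lang ψ_i` resp. `{ε}`. -/
theorem stmt_14 {α : Type} (dollar : α) {m : ℕ}
    (Ls : Fin m → Set (List α)) (ψs : Fin m → Formula α)
    (hne : ∀ i, (Ls i).Nonempty) (c : Fin m → Bool)
    (hcaseA : ∀ i, c i = true → ∀ w ∈ Ls i, w ≠ [] ∧ dollar ∉ w)
    (hcaseB : ∀ i, c i = false →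
      (∀ w ∈ Ls i, ∃ u, dollar ∉ u ∧ w = u ++ [dollar]) ∧ ψs i = Formula.top) :
    Lang dollar (bigOr ((List.finRange m).map fun i => Formula.EF (Ls i) (ψs i))) =
      ⋃ i : Fin m,
        {w | ∃ u ∈ (if c i = true then Ls i
                    else {u | dollar ∉ u ∧ u ++ [dollar] ∈ Ls i}),
             ∃ v ∈ (if c i = true then Lang dollar (ψs i)
                    else ({[]} : Set (List α))),
             w = u ++ v} := by

  ext w
  simp only [Set.mem_iUnion, Set.mem_setOf_eq]
  constructor
  · rintro ⟨hw, hsat⟩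
    rw [SatS, sat_bigOr] at hsat
    obtain ⟨φ, hmem, hs⟩ := hsat
    rw [List.mem_map] at hmem
    obtain ⟨i, -, rfl⟩ := hmem
    obtain ⟨x, t, hp, hxL, hsx⟩ := hs
    replace hp := (path_iff _ _ _ _).mp hp
    obtain ⟨hpre, ht⟩ := hp
    have h0 : x <+: (w ++ [dollar]).drop 0 := hpre
    rw [List.drop_zero] at h0
    have ht' : t.val = 0 + x.length := ht
    cases hci : c i with
    | true =>
      obtain ⟨hxne, hxd⟩ := hcaseA i hci x hxL
      have hxlen : x.length ≤ w.length := by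
        have h1 : x.length ≤ w.length + 1 := by
          have := h0.length_le; simpa using this
        by_contra hcon
        have hx2 : x.length = (w ++ [dollar]).length := by simp; omega
        have := h0.eq_of_length hx2
        exact hxd (this ▸ (by simp : dollar ∈ w ++ [dollar]))
      have hxw : x <+: w := by
        rw [List.prefix_iff_eq_take] at h0 ⊢
        rw [List.take_append_of_le_length hxlen] at h0
        exact h0
      obtain ⟨v, hv⟩ := hxw
      refine ⟨i, x, ?_, v, ?_, hv.symm⟩
      · rw [if_pos hci]; exact hxL
      · rw [if_pos hci]
        constructor
        · intro hdv
          exact hw (hv ▸ (List.mem_append_right x hdv))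
        · have key : w ++ [dollar] = x ++ (v ++ [dollar]) := by
            rw [← hv, List.append_assoc]
          rw [sat_congr key t] at hsx
          exact (sat_at_join x (v ++ [dollar]) (ψs i) _
            (show t.val = x.length by omega)).mp hsx
    | false =>
      obtain ⟨hB, hψ⟩ := hcaseB i hci
      obtain ⟨u', hu'd, rfl⟩ := hB x hxL
      have hlen : u'.length ≤ w.length := by
        have := h0.length_le; simp at this; omega
      have huw : u' = w := by
        rcases eq_or_lt_of_le hlen with heq | hlt
        · have h2 := h0.eq_of_length (by simp [heq])
          exact List.append_cancel_right h2
        · exfalso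
          rw [List.prefix_iff_eq_take] at h0
          have h1 : dollar ∈ u' ++ [dollar] := by simp
          rw [h0, List.take_append_of_le_length (by simp; omega)] at h1
          exact hw (List.take_subset _ _ h1)
      subst huw
      refine ⟨i, u', ?_, [], ?_, by simp⟩
      · rw [if_neg (by simp [hci])]
        exact ⟨hu'd, hxL⟩
      · rw [if_neg (by simp [hci])]
        rfl
  · rintro ⟨i, u, hu, v, hv, rfl⟩
    by_cases hci : c i = true
    · rw [if_pos hci] at hu hv
      obtain ⟨hvd, hvsat⟩ := hv
      obtain ⟨hune, hud⟩ := hcaseA i hci u hu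
      refine ⟨?_, ?_⟩
      · simp only [List.mem_append]
        rintro (h | h)
        exacts [hud h, hvd h]
      · rw [SatS, sat_bigOr]
        refine ⟨_, List.mem_map.mpr ⟨i, List.mem_finRange i, rfl⟩, ?_⟩
        refine ⟨u, ⟨u.length, by
          simp only [List.length_append, List.length_cons, List.length_nil]; omega⟩,
          ?_, hu, ?_⟩
        · apply (path_iff _ _ _ _).mpr
          constructor
          · show u <+: ((u ++ v) ++ [dollar]).drop 0
            rw [List.drop_zero, List.append_assoc]
            exact List.prefix_append u _
          · show u.length = 0 + u.length
            omega
        · have key : (u ++ v) ++ [dollar] = u ++ (v ++ [dollar]) :=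
            List.append_assoc u v [dollar]
          rw [sat_congr key]
          exact (sat_at_join u (v ++ [dollar]) (ψs i) _ rfl).mpr hvsat
    · have hci' : c i = false := by simpa using hci
      rw [if_neg hci] at hu hv
      obtain ⟨hud, huL⟩ := hu
      have hv0 : v = [] := hv
      subst hv0
      obtain ⟨hB, hψ⟩ := hcaseB i hci'
      refine ⟨by simpa using hud, ?_⟩
      rw [SatS, sat_bigOr]
      refine ⟨_, List.mem_map.mpr ⟨i, List.mem_finRange i, rfl⟩, ?_⟩
      refine ⟨u ++ [dollar], ⟨u.length + 1, by
        simp only [List.length_append, List.length_cons, List.length_nil]; omega⟩,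
        ?_, huL, ?_⟩
      · apply (path_iff _ _ _ _).mpr
        constructor
        · show u ++ [dollar] <+: ((u ++ []) ++ [dollar]).drop 0
          simp
        · show u.length + 1 = 0 + (u ++ [dollar]).length
          simp
      · rw [hψ]
        trivial


end PDL
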